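/- Chomsky normal form transformation step (empty production elimination): let G be a hyperedge replacement grammar, A ∈ N with A ≠ S, and suppose A has only an empty production among those being eliminated. Replacing, for each production q = (B, X) containing a hyperedge e labelled A and each production q' = (A, Y), the pair (q, q') by the new production (B, X[e/Y]), and deleting A's productions, yields a grammar G' with L(G') = L(G). -/

import Mathlib

/-- A hypergraph over a label set `C`: finite sets of vertices and hyperedges,
an attachment list and a label for each hyperedge, and a duplicate-free list of
external nodes. -/
structure HRGraph (C : Type) : Type 1 where
  V : Type
  E : Type
  finV : Finite V
  finE : Finite E
  att : E → List V
  lab : E → C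
  ext : List V
  ext_nodup : ext.Nodup

namespace HRGraph

variable {C : Type}

/-- The size `|H| = |V_H| + |E_H|` of a hypergraph. -/
noncomputable def size (H : HRGraph C) : ℕ := Nat.card H.V + Nat.card H.E

/-- Replacement `H[e/R]`: remove the hyperedge `e`, disjointly add the vertices and
hyperedges of `R`, and fuse the `i`-th external node of `R` with the `i`-th
attachment node of `e`. -/
noncomputable def replace (H : HRGraph C) (e : H.E) (R : HRGraph C)
    (hlen : R.ext.length = (H.att e).length) : HRGraph C := by
  classical
  exact
    { V := H.V ⊕ {v : R.V // v ∉ R.ext}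
      E := {e' : H.E // e' ≠ e} ⊕ R.E
      finV := by haveI := H.finV; haveI := R.finV; infer_instance
      finE := by haveI := H.finE; haveI := R.finE; infer_instance
      att := fun x =>
        match x with
        | Sum.inl e' => (H.att e'.1).map Sum.inl
        | Sum.inr f => (R.att f).map (fun v =>
            if hv : v ∈ R.ext then
              Sum.inl ((H.att e).get ⟨R.ext.idxOf v, hlen ▸ List.idxOf_lt_length_iff.mpr hv⟩)
            else Sum.inr ⟨v, hv⟩)
      lab := fun x => match x with | Sum.inl e' => H.lab e'.1 | Sum.inr f => R.lab f
      ext := H.ext.map Sum.inl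
      ext_nodup := List.Nodup.map Sum.inl_injective H.ext_nodup }

/-- Isomorphism of hypergraphs. -/
structure Iso (H K : HRGraph C) where
  vEquiv : H.V ≃ K.V
  eEquiv : H.E ≃ K.E
  att_eq : ∀ e, (H.att e).map vEquiv = K.att (eEquiv e)
  lab_eq : ∀ e, H.lab e = K.lab (eEquiv e)
  ext_eq : H.ext.map vEquiv = K.ext

def Iso.refl (H : HRGraph C) : Iso H H :=
  ⟨Equiv.refl _, Equiv.refl _, by simp, by simp, by simp⟩

def Iso.symm {H K : HRGraph C} (i : Iso H K) : Iso K H where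
  vEquiv := i.vEquiv.symm
  eEquiv := i.eEquiv.symm
  att_eq e := by
    have h := i.att_eq (i.eEquiv.symm e)
    simp only [Equiv.apply_symm_apply] at h
    rw [← h, List.map_map]
    simp
  lab_eq e := by
    have h := i.lab_eq (i.eEquiv.symm e)
    simp only [Equiv.apply_symm_apply] at h
    exact h.symm
  ext_eq := by
    rw [← i.ext_eq, List.map_map]
    simp

def Iso.trans {H K L : HRGraph C} (i : Iso H K) (j : Iso K L) : Iso H L where
  vEquiv := i.vEquiv.trans j.vEquiv
  eEquiv := i.eEquiv.trans j.eEquiv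
  att_eq e := by
    simp only [Equiv.coe_trans, ← List.map_map, i.att_eq, j.att_eq]
    rfl
  lab_eq e := (i.lab_eq e).trans (j.lab_eq (i.eEquiv e))
  ext_eq := by
    simp only [Equiv.coe_trans, ← List.map_map, i.ext_eq, j.ext_eq]

/-- Hypergraphs up to isomorphism. -/
def isoSetoid (C : Type) : Setoid (HRGraph C) :=
  ⟨fun H K => Nonempty (Iso H K),
   ⟨fun H => ⟨Iso.refl H⟩, fun ⟨i⟩ => ⟨i.symm⟩, fun ⟨i⟩ ⟨j⟩ => ⟨i.trans j⟩⟩⟩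

/-- The handle `A•` of a label `A` of type `n`: one hyperedge labelled `A`
attached to `n` pairwise distinct nodes, all of them external. -/
def handle (A : C) (n : ℕ) : HRGraph C where
  V := Fin n
  E := PUnit
  finV := inferInstance
  finE := inferInstance
  att _ := List.finRange n
  lab _ := A
  ext := List.finRange n
  ext_nodup := List.nodup_finRange n

/-- `K` is (isomorphic to) the result of replacing `e` by `R` in `H`. -/
def IsRepl (H : HRGraph C) (e : H.E) (R K : HRGraph C) : Prop :=
  ∃ hlen : R.ext.length = (H.att e).length, Nonempty (Iso K (H.replace e R hlen))

/-- A direct derivation step using some production of `P`. -/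
def Step (P : Set (C × HRGraph C)) (H K : HRGraph C) : Prop :=
  ∃ p ∈ P, ∃ e : H.E, H.lab e = p.1 ∧ IsRepl H e p.2 K

/-- Derivations: the reflexive-transitive closure of `Step`. -/
def Derives (P : Set (C × HRGraph C)) : HRGraph C → HRGraph C → Prop :=
  Relation.ReflTransGen (Step P)

/-- All hyperedges of `H` carry terminal labels. -/
def TerminalGraph (Tm : Set C) (H : HRGraph C) : Prop := ∀ e : H.E, H.lab e ∈ Tm

/-- The language generated from the handle of `S` (of type `tyS`). -/
def Lang (P : Set (C × HRGraph C)) (Tm : Set C) (S : C) (tyS : ℕ) :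
    Set (HRGraph C) :=
  {H | Derives P (handle S tyS) H ∧ TerminalGraph Tm H}

end HRGraph
namespace HRGraph

variable {C : Type}

/-- Simultaneous replacement `H[repl]` of the set `B` of hyperedges of `H`:
each `e ∈ B` is removed, the vertices and hyperedges of `repl e` are disjointly
added, and the `i`-th external node of `repl e` is fused with the `i`-th
attachment node of `e`. -/
noncomputable def replaceSet (H : HRGraph C) (B : Set H.E) (repl : H.E → HRGraph C)
    (hlen : ∀ e ∈ B, (repl e).ext.length = (H.att e).length) : HRGraph C := by
  classical
  exact
    { V := H.V ⊕ Σ e : B, {v : (repl e.1).V // v ∉ (repl e.1).ext}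
      E := {e : H.E // e ∉ B} ⊕ Σ e : B, (repl e.1).E
      finV := by
        haveI := H.finV; haveI := H.finE
        haveI : ∀ e : B, Finite {v : (repl e.1).V // v ∉ (repl e.1).ext} := by
          intro e; haveI := (repl e.1).finV; infer_instance
        infer_instance
      finE := by
        haveI := H.finE
        haveI : ∀ e : B, Finite (repl e.1).E := fun e => (repl e.1).finE
        infer_instance
      att := fun x =>
        match x with
        | Sum.inl e' => (H.att e'.1).map Sum.inl
        | Sum.inr ⟨e, f⟩ => ((repl e.1).att f).map (fun v =>
            if hv : v ∈ (repl e.1).ext then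
              Sum.inl ((H.att e.1).get ⟨(repl e.1).ext.idxOf v,
                hlen e.1 e.2 ▸ List.idxOf_lt_length_iff.mpr hv⟩)
            else Sum.inr ⟨e, v, hv⟩)
      lab := fun x =>
        match x with
        | Sum.inl e' => H.lab e'.1
        | Sum.inr ⟨e, f⟩ => (repl e.1).lab f
      ext := H.ext.map Sum.inl
      ext_nodup := List.Nodup.map Sum.inl_injective H.ext_nodup }

end HRGraph


namespace HRGraph

variable {C : Type}

lemma indexOf_map_inj {α β : Type} [DecidableEq α] [DecidableEq β] (f : α → β)
    (hf : Function.Injective f) (l : List α) (a : α) :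
    (l.map f).idxOf (f a) = l.idxOf a := by
  induction l with
  | nil => rfl
  | cons b t ih =>
      have hb : (f b == f a) = (b == a) := by
        by_cases h : b = a <;> simp [h, hf.eq_iff, beq_iff_eq]
      simp [List.idxOf_cons, ih, hb]

/-- Deleting a set of hyperedges. -/
def delete (H : HRGraph C) (S : Set H.E) : HRGraph C where
  V := H.V
  E := {e : H.E // e ∉ S}
  finV := H.finV
  finE := by haveI := H.finE; exact Subtype.finite
  att e := H.att e.1
  lab e := H.lab e.1
  ext := H.ext
  ext_nodup := H.ext_nodup

def delete_empty (H : HRGraph C) (S : Set H.E) (h : ∀ e, e ∉ S) :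
    Iso (H.delete S) H where
  vEquiv := Equiv.refl _
  eEquiv := Equiv.subtypeUnivEquiv h
  att_eq e := by simp [delete]; exact List.map_id _
  lab_eq e := rfl
  ext_eq := by simp [delete]; exact List.map_id _

def delete_congr {H K : HRGraph C} (i : Iso H K) (S : Set H.E) (S' : Set K.E)
    (hS : ∀ e, e ∈ S ↔ i.eEquiv e ∈ S') : Iso (H.delete S) (K.delete S') where
  vEquiv := i.vEquiv
  eEquiv := i.eEquiv.subtypeEquiv (fun e => not_congr (hS e))
  att_eq e := i.att_eq e.1
  lab_eq e := i.lab_eq e.1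
  ext_eq := i.ext_eq

/-- Deleting `S` equals deleting `f ∈ S` first and then the rest. -/
def delete_delete (H : HRGraph C) (S : Set H.E) (f : H.E) (hf : f ∈ S) :
    Iso (H.delete S) ((H.delete {f}).delete {x | x.1 ∈ S}) where
  vEquiv := Equiv.refl _
  eEquiv :=
    { toFun := fun x => ⟨⟨x.1, fun hx => x.2 (by rwa [Set.mem_singleton_iff.mp hx])⟩, x.2⟩
      invFun := fun y => ⟨y.1.1, y.2⟩
      left_inv := fun x => rfl
      right_inv := fun y => rfl }
  att_eq e := by simp [delete]; exact List.map_id _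
  lab_eq e := rfl
  ext_eq := by simp [delete]; exact List.map_id _

noncomputable def replace_congr_edge (H : HRGraph C) {e e' : H.E} (R : HRGraph C)
    (h : R.ext.length = (H.att e).length) (hee : e = e') :
    Iso (H.replace e R h) (H.replace e' R (hee ▸ h)) := by
  subst hee; exact Iso.refl _

noncomputable def replace_iso_left {H K : HRGraph C} (i : Iso H K) (e : H.E) (R : HRGraph C)
    (h : R.ext.length = (H.att e).length)
    (h' : R.ext.length = (K.att (i.eEquiv e)).length) :
    Iso (H.replace e R h) (K.replace (i.eEquiv e) R h') where
  vEquiv := Equiv.sumCongr i.vEquiv (Equiv.refl _)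
  eEquiv := Equiv.sumCongr (i.eEquiv.subtypeEquiv fun a => by
    constructor
    · intro ha hc; exact ha (i.eEquiv.injective hc)
    · intro ha hc; exact ha (by rw [hc])) (Equiv.refl _)
  att_eq x := by
    classical
    match x with
    | Sum.inl e' =>
        show ((H.att e'.1).map Sum.inl).map _ = (K.att (i.eEquiv e'.1)).map Sum.inl
        erw [← i.att_eq, List.map_map, List.map_map]
        rfl
    | Sum.inr f =>
        show List.map _ (List.map _ (R.att f)) = List.map _ (R.att f)
        erw [List.map_map]
        apply List.map_congr_left
        intro v _
        by_cases hv : v ∈ R.ext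
        · have hK : K.att (i.eEquiv e) = (H.att e).map i.vEquiv := (i.att_eq e).symm
          simp only [Function.comp_apply, dif_pos hv, hK, List.get_eq_getElem,
            List.getElem_map, Equiv.sumCongr_apply, Sum.map_inl]
          erw [Function.comp_apply, dif_pos hv]
          rfl
        · simp only [Function.comp_apply, dif_neg hv, Equiv.sumCongr_apply, Sum.map_inr]
          erw [Function.comp_apply, dif_neg hv]
          rfl
  lab_eq x := by
    match x with
    | Sum.inl e' => exact i.lab_eq e'.1
    | Sum.inr f => rfl
  ext_eq := by
    show (List.map Sum.inl H.ext).map _ = List.map Sum.inl K.ext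
    erw [← i.ext_eq, List.map_map, List.map_map]
    rfl

noncomputable def replace_iso_right {R R' : HRGraph C} (j : Iso R R') (H : HRGraph C)
    (e : H.E) (h : R.ext.length = (H.att e).length)
    (h' : R'.ext.length = (H.att e).length) :
    Iso (H.replace e R h) (H.replace e R' h') := by
  classical
  have hext : R'.ext = R.ext.map j.vEquiv := j.ext_eq.symm
  have hmem : ∀ v : R.V, v ∈ R.ext ↔ j.vEquiv v ∈ R'.ext := by
    intro v
    rw [hext]
    exact (List.mem_map_of_injective j.vEquiv.injective).symm
  exact
  { vEquiv := Equiv.sumCongr (Equiv.refl _)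
      (j.vEquiv.subtypeEquiv fun v => not_congr (hmem v))
    eEquiv := Equiv.sumCongr (Equiv.refl _) j.eEquiv
    att_eq := fun x => by
      match x with
      | Sum.inl e' =>
          show ((H.att e'.1).map Sum.inl).map _ = (H.att e'.1).map Sum.inl
          erw [List.map_map]; rfl
      | Sum.inr f =>
          show List.map _ (List.map _ (R.att f)) = List.map _ (R'.att (j.eEquiv f))
          erw [← j.att_eq f, List.map_map, List.map_map]
          apply List.map_congr_left
          intro v _
          by_cases hv : v ∈ R.ext
          · have hv' : j.vEquiv v ∈ R'.ext := (hmem v).mp hv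
            have hidx : R'.ext.idxOf (j.vEquiv v) = R.ext.idxOf v := by
              rw [hext]; exact indexOf_map_inj _ j.vEquiv.injective _ _
            simp only [Function.comp_apply, dif_pos hv, dif_pos hv',
              Equiv.sumCongr_apply, Sum.map_inl, List.get_eq_getElem, hidx]
            erw [Function.comp_apply, Function.comp_apply, dif_pos hv]
            beta_reduce
            simp only [dif_pos hv', hidx]
            rfl
          · have hv' : j.vEquiv v ∉ R'.ext := fun hc => hv ((hmem v).mpr hc)
            erw [Function.comp_apply, Function.comp_apply, dif_neg hv]
            beta_reduce
            rw [dif_neg hv']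
            rfl
    lab_eq := fun x => by
      match x with
      | Sum.inl e' => rfl
      | Sum.inr f => exact j.lab_eq f
    ext_eq := by
      show (List.map Sum.inl H.ext).map _ = List.map Sum.inl H.ext
      erw [List.map_map]; rfl }

/-- Replacing every hyperedge of `B` by an "empty" hypergraph (no hyperedges,
all nodes external) just deletes those hyperedges. -/
noncomputable def replaceSet_iso_delete (X : HRGraph C) (B : Set X.E)
    (repl : X.E → HRGraph C)
    (hlen : ∀ e ∈ B, (repl e).ext.length = (X.att e).length)
    (hemp : ∀ e ∈ B, IsEmpty (repl e).E ∧ ∀ v : (repl e).V, v ∈ (repl e).ext) :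
    Iso (X.replaceSet B repl hlen) (X.delete B) := by
  classical
  haveI hVemp : IsEmpty (Σ e : B, {v : (repl e.1).V // v ∉ (repl e.1).ext}) := by
    constructor; rintro ⟨e, v, hv⟩; exact hv ((hemp e.1 e.2).2 v)
  haveI hEemp : IsEmpty (Σ e : B, (repl e.1).E) := by
    constructor; rintro ⟨e, f⟩; exact ((hemp e.1 e.2).1).elim f
  exact
  { vEquiv := Equiv.sumEmpty _ _
    eEquiv := Equiv.sumEmpty _ _
    att_eq := fun x => by
      match x with
      | Sum.inl e' =>
          show ((X.att e'.1).map Sum.inl).map _ = X.att e'.1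
          erw [List.map_map]
          exact (List.map_congr_left fun a _ => rfl).trans (List.map_id _)
      | Sum.inr y => exact hEemp.elim y
    lab_eq := fun x => by
      match x with
      | Sum.inl e' => rfl
      | Sum.inr y => exact hEemp.elim y
    ext_eq := by
      show (List.map Sum.inl X.ext).map _ = X.ext
      erw [List.map_map]
      exact (List.map_congr_left fun a _ => rfl).trans (List.map_id _) }

/-- Replacing a hyperedge by an "empty" hypergraph deletes it. -/
noncomputable def delete_iso_replace_empty (H : HRGraph C) (f : H.E)
    (R : HRGraph C) (hlen : R.ext.length = (H.att f).length)
    (hE : IsEmpty R.E) (hV : ∀ v : R.V, v ∈ R.ext) :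
    Iso (H.delete {f}) (H.replace f R hlen) := by
  classical
  haveI : IsEmpty {v : R.V // v ∉ R.ext} := ⟨fun v => v.2 (hV v.1)⟩
  haveI := hE
  exact
  { vEquiv := (Equiv.sumEmpty _ _).symm
    eEquiv := ((Equiv.subtypeEquivRight (fun e => by
        simp [Set.mem_singleton_iff])).trans (Equiv.sumEmpty _ _).symm :
        {e : H.E // e ∉ ({f} : Set H.E)} ≃ ({e : H.E // e ≠ f} ⊕ R.E))
    att_eq := fun e' => by
      show (H.att e'.1).map _ = (H.att e'.1).map Sum.inl
      apply List.map_congr_left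
      intro v _
      rfl
    lab_eq := fun e' => rfl
    ext_eq := by
      show H.ext.map _ = H.ext.map Sum.inl
      apply List.map_congr_left
      intro v _
      rfl }

/-- Deleting edges inside and outside a replaced part commutes with replacement. -/
noncomputable def replace_delete (H : HRGraph C) (e : H.E) (R : HRGraph C)
    (hlen : R.ext.length = (H.att e).length)
    (S₁ : Set H.E) (he : e ∉ S₁) (S₂ : Set R.E)
    (S : Set (H.replace e R hlen).E)
    (hS : ∀ x, x ∈ S ↔ Sum.elim (fun e' => e'.1 ∈ S₁) (fun f => f ∈ S₂) x)
    (hlen' : (R.delete S₂).ext.length = ((H.delete S₁).att ⟨e, he⟩).length) :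
    Iso ((H.replace e R hlen).delete S)
      ((H.delete S₁).replace ⟨e, he⟩ (R.delete S₂) hlen') := by
  classical
  exact
  { vEquiv := Equiv.refl _
    eEquiv :=
    { toFun := fun x =>
        match x with
        | ⟨Sum.inl e', hx⟩ =>
            Sum.inl ⟨⟨e'.1, fun h1 => hx ((hS _).mpr h1)⟩,
              fun hc => e'.2 (congrArg Subtype.val hc)⟩
        | ⟨Sum.inr f, hx⟩ => Sum.inr ⟨f, fun h2 => hx ((hS _).mpr h2)⟩
      invFun := fun y =>
        match y with
        | Sum.inl z => ⟨Sum.inl ⟨z.1.1, fun hc => z.2 (Subtype.ext hc)⟩,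
            fun hc => z.1.2 ((hS _).mp hc)⟩
        | Sum.inr w => ⟨Sum.inr w.1, fun hc => w.2 ((hS _).mp hc)⟩
      left_inv := fun x => by
        obtain ⟨x, hx⟩ := x
        cases x <;> rfl
      right_inv := fun y => by
        cases y <;> rfl }
    att_eq := fun x => by
      obtain ⟨x, hx⟩ := x
      match x with
      | Sum.inl e' =>
          show List.map _ ((H.att e'.1).map Sum.inl) = ((H.delete S₁).att _).map Sum.inl
          erw [List.map_map]
          exact List.map_congr_left fun a _ => rfl
      | Sum.inr f =>
          show List.map _ (List.map _ (R.att f)) = List.map _ ((R.delete S₂).att ⟨f, _⟩)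
          erw [List.map_map]
          apply List.map_congr_left
          intro v _
          by_cases hv : v ∈ R.ext
          · have hv2 : v ∈ (R.delete S₂).ext := hv
            erw [Function.comp_apply, dif_pos hv]
            rfl
          · have hv2 : v ∉ (R.delete S₂).ext := hv
            erw [Function.comp_apply, dif_neg hv]
            rfl
    lab_eq := fun x => by
      obtain ⟨x, hx⟩ := x
      cases x <;> rfl
    ext_eq := by
      show List.map _ (H.ext.map Sum.inl) = (H.delete S₁).ext.map Sum.inl
      erw [List.map_map]
      exact List.map_congr_left fun a _ => rfl }

section Main

variable {P : Set (C × HRGraph C)} {Tm : Set C} {A : C}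

lemma step_delete_single
    (hA : ∀ R : HRGraph C, (A, R) ∈ P → IsEmpty R.E ∧ ∀ v : R.V, v ∈ R.ext)
    (G : HRGraph C) (f : G.E) (hf : G.lab f = A) (R : HRGraph C)
    (hR : (A, R) ∈ P) (hlen : R.ext.length = (G.att f).length)
    (K : HRGraph C) (hK : Nonempty (Iso K (G.delete {f}))) : Step P G K :=
  ⟨(A, R), hR, f, hf, hlen,
    ⟨hK.some.trans (delete_iso_replace_empty G f R hlen (hA R hR).1 (hA R hR).2)⟩⟩

lemma derives_delete
    (hA : ∀ R : HRGraph C, (A, R) ∈ P → IsEmpty R.E ∧ ∀ v : R.V, v ∈ R.ext)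
    (n : ℕ) :
    ∀ (G : HRGraph C) (S : Set G.E), Nat.card S = n →
      (∀ f ∈ S, G.lab f = A) →
      (∀ f ∈ S, ∃ R, (A, R) ∈ P ∧ R.ext.length = (G.att f).length) →
      ∀ K : HRGraph C, Nonempty (Iso K (G.delete S)) →
      Derives P G K ∨ (Nonempty (Iso K G) ∧ S = ∅) := by
  induction n with
  | zero =>
      intro G S hcard hlab hprod K hK
      haveI := G.finE
      haveI : Finite S := Subtype.finite
      have hempty : IsEmpty S := by
        rcases Nat.card_eq_zero.mp hcard with h | h
        · exact h
        · exact absurd h (not_infinite_iff_finite.mpr ‹_›)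
      have hS : S = ∅ := Set.isEmpty_coe_sort.mp hempty
      exact Or.inr ⟨⟨hK.some.trans (delete_empty G S (by simp [hS]))⟩, hS⟩
  | succ n ih =>
      intro G S hcard hlab hprod K hK
      classical
      haveI := G.finE
      haveI : Finite S := Subtype.finite
      have hne : Nonempty S := by
        have : 0 < Nat.card S := by omega
        exact (Nat.card_pos_iff.mp this).1
      obtain ⟨f, hf⟩ := hne
      set S1 : Set (G.delete {f}).E := {x | x.1 ∈ S} with hS1def
      have heqv : (S1 ⊕ PUnit.{1}) ≃ S :=
        { toFun := fun z =>
            match z with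
            | Sum.inl x => ⟨x.1.1, x.2⟩
            | Sum.inr _ => ⟨f, hf⟩
          invFun := fun s =>
            if h : s.1 = f then Sum.inr PUnit.unit
            else Sum.inl ⟨⟨s.1, by simp [h]⟩, s.2⟩
          left_inv := fun z => by
            match z with
            | Sum.inl x =>
                have : x.1.1 ≠ f := by
                  intro hc; exact x.1.2 (by simp [hc])
                simp [this]
                rfl
            | Sum.inr u => cases u; simp
          right_inv := fun s => by
            by_cases h : s.1 = f
            · simp only [dif_pos h]; exact Subtype.ext h.symm
            · simp only [dif_neg h] }
      haveI : Finite (G.delete {f}).E := (G.delete {f}).finE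
      haveI : Finite S1 := Subtype.finite
      have hcard1 : Nat.card S1 = n := by
        have := Nat.card_congr heqv
        rw [Nat.card_sum] at this
        simp only [Nat.card_unique] at this
        omega
      have hres := ih (G.delete {f}) S1 hcard1
        (fun x hx => hlab x.1 hx)
        (fun x hx => hprod x.1 hx)
        K ⟨hK.some.trans (delete_delete G S f hf)⟩
      obtain ⟨R, hR, hlenR⟩ := hprod f hf
      rcases hres with h | ⟨hiso, _⟩
      · exact Or.inl (Relation.ReflTransGen.head
          (step_delete_single hA G f (hlab f hf) R hR hlenR _ ⟨Iso.refl _⟩) h)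
      · exact Or.inl (Relation.ReflTransGen.single
          (step_delete_single hA G f (hlab f hf) R hR hlenR K hiso))

lemma persist (hATm : A ∉ Tm) {H K : HRGraph C}
    (hd : Derives P H K) (hK : TerminalGraph Tm K) :
    ∀ e : H.E, H.lab e = A → ∃ R, (A, R) ∈ P ∧ R.ext.length = (H.att e).length := by
  induction hd using Relation.ReflTransGen.head_induction_on with
  | refl => intro e he; exact absurd (he ▸ hK e) hATm
  | head h' h ih =>
      intro e he
      obtain ⟨p, hp, e0, hlab0, hlen0, ⟨i⟩⟩ := h'
      by_cases hee : e = e0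
      · subst hee
        have h1 : p.1 = A := by rw [← hlab0, he]
        refine ⟨p.2, ?_, hlen0⟩
        rw [← h1]
        simpa using hp
      · obtain ⟨R, hR, hl⟩ := ih (i.eEquiv.symm (Sum.inl ⟨e, hee⟩)) (by
          erw [i.lab_eq, Equiv.apply_symm_apply]
          exact he)
        refine ⟨R, hR, ?_⟩
        rw [hl]
        have hatt := i.att_eq (i.eEquiv.symm (Sum.inl ⟨e, hee⟩))
        erw [Equiv.apply_symm_apply] at hatt
        have h2 := congrArg List.length hatt
        rw [List.length_map] at h2
        rw [h2]
        exact List.length_map _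

lemma sim_back {P' : Set (C × HRGraph C)}
    (hA : ∀ R : HRGraph C, (A, R) ∈ P → IsEmpty R.E ∧ ∀ v : R.V, v ∈ R.ext)
    (hATm : A ∉ Tm)
    (hP'intro : ∀ (B : C) (X : HRGraph C), (B, X) ∈ P → B ≠ A →
      ∀ (repl : X.E → HRGraph C), (∀ e : X.E, X.lab e = A → (A, repl e) ∈ P) →
      ∀ hlen : (∀ e ∈ {e : X.E | X.lab e = A}, (repl e).ext.length = (X.att e).length),
      (B, X.replaceSet {e : X.E | X.lab e = A} repl hlen) ∈ P')
    {H K : HRGraph C} (hd : Derives P H K) (hK : TerminalGraph Tm K) :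
    ∀ H' : HRGraph C,
      Nonempty (Iso H' (H.delete {e : H.E | H.lab e = A})) →
      Derives P' H' K ∨
        (Nonempty (Iso H' K) ∧ (H = K ∨ ∃ e : H.E, H.lab e = A)) := by
  classical
  induction hd using Relation.ReflTransGen.head_induction_on with
  | refl =>
      intro H' ⟨i⟩
      exact Or.inr ⟨⟨i.trans (delete_empty K _ (fun e he => hATm (he ▸ hK e)))⟩,
        Or.inl rfl⟩
  | @head G G1 h' h ih =>
      intro H' ⟨iH'⟩
      obtain ⟨⟨B, R0⟩, hp, e, hlabe, hlen, ⟨i1⟩⟩ := h'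
      by_cases hBA : B = A
      · -- the step deletes an A-edge; absorb it
        have hlabA : G.lab e = A := by rw [hlabe]; exact hBA
        have hpA : (A, R0) ∈ P := hBA ▸ hp
        have hemp := hA R0 hpA
        have i2 : Iso (G.replace e R0 hlen) (G.delete {e}) :=
          (delete_iso_replace_empty G e R0 hlen hemp.1 hemp.2).symm
        have j1 : Iso (G1.delete {x : G1.E | G1.lab x = A})
            ((G.replace e R0 hlen).delete
              {x : (G.replace e R0 hlen).E | (G.replace e R0 hlen).lab x = A}) :=
          delete_congr i1 _ _ (fun x => by
            rw [Set.mem_setOf_eq, Set.mem_setOf_eq, i1.lab_eq x])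
        have j2 : Iso ((G.replace e R0 hlen).delete
              {x : (G.replace e R0 hlen).E | (G.replace e R0 hlen).lab x = A})
            ((G.delete {e}).delete {x : (G.delete {e}).E | x.1 ∈ {e' : G.E | G.lab e' = A}}) :=
          delete_congr i2 _ _ (fun x => by
            rw [Set.mem_setOf_eq, Set.mem_setOf_eq, i2.lab_eq x]
            exact Iff.rfl)
        have j3 : Iso (G.delete {e' : G.E | G.lab e' = A})
            ((G.delete {e}).delete {x : (G.delete {e}).E | x.1 ∈ {e' : G.E | G.lab e' = A}}) :=
          delete_delete G _ e hlabA
        rcases ih H' ⟨iH'.trans (j3.trans (j1.trans j2).symm)⟩ with hl | ⟨hiso, _⟩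
        · exact Or.inl hl
        · exact Or.inr ⟨hiso, Or.inr ⟨e, hlabA⟩⟩
      · -- simulate the step with the combined production
        have hprodf : ∀ f : R0.E, R0.lab f = A →
            ∃ R, (A, R) ∈ P ∧ R.ext.length = (R0.att f).length := by
          intro f hfA
          obtain ⟨R, hR, hl⟩ := persist hATm h hK (i1.eEquiv.symm (Sum.inr f)) (by
            erw [i1.lab_eq, Equiv.apply_symm_apply]
            exact hfA)
          refine ⟨R, hR, ?_⟩
          rw [hl]
          have hatt := i1.att_eq (i1.eEquiv.symm (Sum.inr f))
          erw [Equiv.apply_symm_apply] at hatt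
          have h2 := congrArg List.length hatt
          rw [List.length_map] at h2
          rw [h2]
          exact List.length_map _
        have hex : ∃ repl : R0.E → HRGraph C,
            (∀ f : R0.E, R0.lab f = A → (A, repl f) ∈ P) ∧
            (∀ f ∈ {f : R0.E | R0.lab f = A}, (repl f).ext.length = (R0.att f).length) := by
          refine ⟨fun f => if hfA : R0.lab f = A then (hprodf f hfA).choose else handle A 0,
            fun f hfA => ?_, fun f hfA => ?_⟩
          · beta_reduce
            rw [dif_pos hfA]
            exact (hprodf f hfA).choose_spec.1
          · simp only [Set.mem_setOf_eq] at hfA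
            beta_reduce
            rw [dif_pos hfA]
            exact (hprodf f hfA).choose_spec.2
        obtain ⟨repl, hrepl, hlenQ⟩ := hex
        have hQmem : (B, R0.replaceSet {f : R0.E | R0.lab f = A} repl hlenQ) ∈ P' :=
          hP'intro B R0 hp hBA repl hrepl hlenQ
        have he : e ∉ {e' : G.E | G.lab e' = A} := by
          rw [Set.mem_setOf_eq, hlabe]
          exact hBA
        have hlenDel : R0.ext.length =
            ((G.delete {e' : G.E | G.lab e' = A}).att ⟨e, he⟩).length := hlen
        have hlab' : H'.lab (iH'.eEquiv.symm ⟨e, he⟩) = B := by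
          erw [iH'.lab_eq, Equiv.apply_symm_apply]
          exact hlabe
        have hattlen : (H'.att (iH'.eEquiv.symm ⟨e, he⟩)).length = (G.att e).length := by
          have hatt := iH'.att_eq (iH'.eEquiv.symm ⟨e, he⟩)
          erw [Equiv.apply_symm_apply] at hatt
          have h2 := congrArg List.length hatt
          rw [List.length_map] at h2
          exact h2
        have hQext : (R0.replaceSet {f : R0.E | R0.lab f = A} repl hlenQ).ext.length
            = R0.ext.length := List.length_map _
        have hlen' : (R0.replaceSet {f : R0.E | R0.lab f = A} repl hlenQ).ext.length
            = (H'.att (iH'.eEquiv.symm ⟨e, he⟩)).length := by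
          rw [hQext, hattlen]
          exact hlen
        have hstep' : Step P' H'
            (H'.replace (iH'.eEquiv.symm ⟨e, he⟩)
              (R0.replaceSet {f : R0.E | R0.lab f = A} repl hlenQ) hlen') :=
          ⟨(B, _), hQmem, _, hlab', hlen', ⟨Iso.refl _⟩⟩
        -- now build the isomorphism with G1's A-deletion
        have hlenc : (R0.replaceSet {f : R0.E | R0.lab f = A} repl hlenQ).ext.length =
            ((G.delete {e' : G.E | G.lab e' = A}).att
              (iH'.eEquiv (iH'.eEquiv.symm ⟨e, he⟩))).length := by
          erw [Equiv.apply_symm_apply]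
          exact hQext.trans hlenDel
        have c1 : Iso (H'.replace (iH'.eEquiv.symm ⟨e, he⟩)
              (R0.replaceSet {f : R0.E | R0.lab f = A} repl hlenQ) hlen')
            ((G.delete {e' : G.E | G.lab e' = A}).replace
              (iH'.eEquiv (iH'.eEquiv.symm ⟨e, he⟩))
              (R0.replaceSet {f : R0.E | R0.lab f = A} repl hlenQ) hlenc) :=
          replace_iso_left iH' _ _ hlen' hlenc
        have c2 := replace_congr_edge (G.delete {e' : G.E | G.lab e' = A})
          (R0.replaceSet {f : R0.E | R0.lab f = A} repl hlenQ) hlenc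
          (Equiv.apply_symm_apply iH'.eEquiv (⟨e, he⟩ :
            (G.delete {e' : G.E | G.lab e' = A}).E))
        have hDelQ : Iso (R0.replaceSet {f : R0.E | R0.lab f = A} repl hlenQ)
            (R0.delete {f : R0.E | R0.lab f = A}) :=
          replaceSet_iso_delete R0 _ repl hlenQ (fun f hf => hA _ (hrepl f hf))
        have c3 : Iso ((G.delete {e' : G.E | G.lab e' = A}).replace ⟨e, he⟩
              (R0.replaceSet {f : R0.E | R0.lab f = A} repl hlenQ)
              (hQext.trans hlenDel))
            ((G.delete {e' : G.E | G.lab e' = A}).replace ⟨e, he⟩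
              (R0.delete {f : R0.E | R0.lab f = A}) hlenDel) :=
          replace_iso_right hDelQ _ _ _ hlenDel
        have c4 : Iso ((G.replace e R0 hlen).delete
              {x : (G.replace e R0 hlen).E | (G.replace e R0 hlen).lab x = A})
            ((G.delete {e' : G.E | G.lab e' = A}).replace ⟨e, he⟩
              (R0.delete {f : R0.E | R0.lab f = A}) hlenDel) :=
          replace_delete G e R0 hlen _ he _ _
            (fun x => by cases x <;> exact Iff.rfl) hlenDel
        have c5 : Iso (G1.delete {x : G1.E | G1.lab x = A})
            ((G.replace e R0 hlen).delete
              {x : (G.replace e R0 hlen).E | (G.replace e R0 hlen).lab x = A}) :=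
          delete_congr i1 _ _ (fun x => by
            rw [Set.mem_setOf_eq, Set.mem_setOf_eq, i1.lab_eq x])
        have total := c1.trans (c2.trans (c3.trans (c4.symm.trans c5.symm)))
        rcases ih _ ⟨total⟩ with hl | ⟨⟨hiso⟩, _⟩
        · exact Or.inl (Relation.ReflTransGen.head hstep' hl)
        · exact Or.inl (Relation.ReflTransGen.single
            ⟨(B, _), hQmem, _, hlab', hlen', ⟨hiso.symm⟩⟩)

lemma sim_fwd_step {P' : Set (C × HRGraph C)}
    (hA : ∀ R : HRGraph C, (A, R) ∈ P → IsEmpty R.E ∧ ∀ v : R.V, v ∈ R.ext)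
    (hP'elim : ∀ q ∈ P', ∃ (B : C) (X : HRGraph C), (B, X) ∈ P ∧ B ≠ A ∧
      ∃ (repl : X.E → HRGraph C)
        (_ : ∀ e : X.E, X.lab e = A → (A, repl e) ∈ P)
        (hlen : ∀ e ∈ {e : X.E | X.lab e = A},
          (repl e).ext.length = (X.att e).length),
        q = (B, X.replaceSet {e : X.E | X.lab e = A} repl hlen))
    {H K : HRGraph C} (h : Step P' H K) : Derives P H K := by
  classical
  obtain ⟨q, hq, e, hlabe, hlen', ⟨iK⟩⟩ := h
  obtain ⟨B, X, hP, hBA, repl, hrepl, hlenQ, rfl⟩ := hP'elim q hq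
  have hQext : (X.replaceSet {f : X.E | X.lab f = A} repl hlenQ).ext.length
      = X.ext.length := List.length_map _
  have hlen1 : X.ext.length = (H.att e).length := by
    rw [← hQext]
    exact hlen'
  have hstep1 : Step P H (H.replace e X hlen1) :=
    ⟨(B, X), hP, e, hlabe, hlen1, ⟨Iso.refl _⟩⟩
  have hDelQ : Iso (X.replaceSet {f : X.E | X.lab f = A} repl hlenQ)
      (X.delete {f : X.E | X.lab f = A}) :=
    replaceSet_iso_delete X _ repl hlenQ (fun f hf => hA _ (hrepl f hf))
  have hlen2 : (X.delete {f : X.E | X.lab f = A}).ext.length = (H.att e).length := hlen1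
  have c3 : Iso (H.replace e (X.replaceSet {f : X.E | X.lab f = A} repl hlenQ) hlen')
      (H.replace e (X.delete {f : X.E | X.lab f = A}) hlen2) :=
    replace_iso_right hDelQ H e hlen' hlen2
  have he0 : e ∉ (∅ : Set H.E) := Set.notMem_empty e
  let i0 : Iso (H.delete (∅ : Set H.E)) H :=
    delete_empty H ∅ (fun x => Set.notMem_empty x)
  have hlen3 : (X.delete {f : X.E | X.lab f = A}).ext.length =
      ((H.delete (∅ : Set H.E)).att ⟨e, he0⟩).length := hlen1
  have c4 : Iso ((H.replace e X hlen1).delete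
        {x : (H.replace e X hlen1).E |
          Sum.elim (fun e' => e'.1 ∈ (∅ : Set H.E)) (fun f => f ∈ {f : X.E | X.lab f = A}) x})
      ((H.delete (∅ : Set H.E)).replace ⟨e, he0⟩
        (X.delete {f : X.E | X.lab f = A}) hlen3) :=
    replace_delete H e X hlen1 ∅ he0 _ _ (fun x => Iff.rfl) hlen3
  have hi0 : i0.eEquiv ⟨e, he0⟩ = e := rfl
  have hlen4 : (X.delete {f : X.E | X.lab f = A}).ext.length =
      (H.att (i0.eEquiv ⟨e, he0⟩)).length := by rw [hi0]; exact hlen1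
  have c5 : Iso ((H.delete (∅ : Set H.E)).replace ⟨e, he0⟩
        (X.delete {f : X.E | X.lab f = A}) hlen3)
      (H.replace (i0.eEquiv ⟨e, he0⟩) (X.delete {f : X.E | X.lab f = A}) hlen4) :=
    replace_iso_left i0 _ _ hlen3 hlen4
  have c6 := replace_congr_edge H (X.delete {f : X.E | X.lab f = A}) hlen4
    hi0
  -- K is isomorphic to deleting all the A-edges of `H.replace e X`
  have hiso : Nonempty (Iso K ((H.replace e X hlen1).delete
      {x : (H.replace e X hlen1).E |
        Sum.elim (fun e' => e'.1 ∈ (∅ : Set H.E)) (fun f => f ∈ {f : X.E | X.lab f = A}) x})) :=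
    ⟨iK.trans (c3.trans ((c5.trans c6).symm.trans c4.symm))⟩
  have hres := derives_delete hA (Nat.card {x : (H.replace e X hlen1).E //
      Sum.elim (fun e' => e'.1 ∈ (∅ : Set H.E)) (fun f => f ∈ {f : X.E | X.lab f = A}) x})
    (H.replace e X hlen1) _ rfl
    (fun x hx => by
      match x with
      | Sum.inl e' => exact absurd hx (Set.notMem_empty e'.1)
      | Sum.inr f => exact hx)
    (fun x hx => by
      match x with
      | Sum.inl e' => exact absurd hx (Set.notMem_empty e'.1)
      | Sum.inr f =>
          refine ⟨repl f, hrepl f hx, ?_⟩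
          rw [hlenQ f hx]
          exact (List.length_map _).symm)
    K hiso
  rcases hres with hD | ⟨⟨hiso2⟩, _⟩
  · exact Relation.ReflTransGen.head hstep1 hD
  · exact Relation.ReflTransGen.single ⟨(B, X), hP, e, hlabe, hlen1, ⟨hiso2⟩⟩


lemma sim_fwd {P' : Set (C × HRGraph C)}
    (hA : ∀ R : HRGraph C, (A, R) ∈ P → IsEmpty R.E ∧ ∀ v : R.V, v ∈ R.ext)
    (hP'elim : ∀ q ∈ P', ∃ (B : C) (X : HRGraph C), (B, X) ∈ P ∧ B ≠ A ∧
      ∃ (repl : X.E → HRGraph C)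
        (_ : ∀ e : X.E, X.lab e = A → (A, repl e) ∈ P)
        (hlen : ∀ e ∈ {e : X.E | X.lab e = A},
          (repl e).ext.length = (X.att e).length),
        q = (B, X.replaceSet {e : X.E | X.lab e = A} repl hlen))
    {H K : HRGraph C} (h : Derives P' H K) : Derives P H K := by
  induction h with
  | refl => exact Relation.ReflTransGen.refl
  | tail hstep htail ih =>
      exact Relation.ReflTransGen.trans ih (sim_fwd_step hA hP'elim htail)

end Main

end HRGraph

open HRGraph

/-- Chomsky normal form transformation step (empty production
elimination): let `A ≠ S` be a non-terminal all of whose productions are empty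
(no hyperedges, all nodes external).  Replacing every production `q = (B, X)`
(with `B ≠ A`) by the productions obtained by substituting, for each hyperedge
of `X` labelled `A`, the right-hand side of one of `A`'s productions, and
deleting `A`'s productions, yields a grammar generating the same language. -/
theorem empty_production_elimination {C : Type} (Tm : Set C)
    (P : Set (C × HRGraph C)) (S A : C) (tyS : ℕ)
    (hAS : A ≠ S) (hATm : A ∉ Tm)
    (hAempty : ∀ R : HRGraph C, (A, R) ∈ P →
      IsEmpty R.E ∧ (∀ v : R.V, v ∈ R.ext)) :
    HRGraph.Lang
      {q | ∃ (B : C) (X : HRGraph C), (B, X) ∈ P ∧ B ≠ A ∧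
        ∃ (repl : X.E → HRGraph C)
          (hrepl : ∀ e : X.E, X.lab e = A → (A, repl e) ∈ P)
          (hlen : ∀ e ∈ {e : X.E | X.lab e = A},
            (repl e).ext.length = (X.att e).length),
          q = (B, X.replaceSet {e : X.E | X.lab e = A} repl hlen)}
      Tm S tyS
      = HRGraph.Lang P Tm S tyS := by
  ext K
  simp only [Lang, Set.mem_setOf_eq]
  constructor
  · rintro ⟨hd, ht⟩
    refine ⟨sim_fwd hAempty (fun q hq => ?_) hd, ht⟩
    exact hq
  · rintro ⟨hd, ht⟩
    refine ⟨?_, ht⟩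
    have h0 : Nonempty (Iso (handle S tyS)
        ((handle S tyS).delete {e : (handle S tyS).E | (handle S tyS).lab e = A})) :=
      ⟨(delete_empty _ _ (fun e he => hAS (Set.mem_setOf_eq ▸ he).symm)).symm⟩
    have hintro : ∀ (B : C) (X : HRGraph C), (B, X) ∈ P → B ≠ A →
        ∀ (repl : X.E → HRGraph C), (∀ e : X.E, X.lab e = A → (A, repl e) ∈ P) →
        ∀ hlen : (∀ e ∈ {e : X.E | X.lab e = A},
          (repl e).ext.length = (X.att e).length),
        (B, X.replaceSet {e : X.E | X.lab e = A} repl hlen) ∈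
          {q | ∃ (B : C) (X : HRGraph C), (B, X) ∈ P ∧ B ≠ A ∧
            ∃ (repl : X.E → HRGraph C)
              (hrepl : ∀ e : X.E, X.lab e = A → (A, repl e) ∈ P)
              (hlen : ∀ e ∈ {e : X.E | X.lab e = A},
                (repl e).ext.length = (X.att e).length),
              q = (B, X.replaceSet {e : X.E | X.lab e = A} repl hlen)} := by
      intro B X h1 h2 repl h3 h4
      exact ⟨B, X, h1, h2, repl, h3, h4, rfl⟩
    rcases sim_back hAempty hATm hintro hd ht (handle S tyS) h0 with hD | ⟨_, hor⟩
    · exact hD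
    · rcases hor with heq | ⟨e, he⟩
      · rw [← heq]
        exact Relation.ReflTransGen.refl
      · exact absurd he.symm hAS
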